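/- Let φ, φ̃ : M → N be two smooth maps with corresponding local variables u_j, v_j, A_j and ũ_j, ṽ_j, Ã_j, and let 0 ≤ j ≤ k−3. Then on any open set D whose closure is compact and contained in the chart domain, there exists a constant C > 0 such that |(u_{j+1} − A_{j+1}) − (ũ_{j+1} − Ã_{j+1})| ≤ C( |φ − φ̃| + |dφ − dφ̃| + |u₀ − ũ₀| + |u_j − ũ_j| + |u_{j+1} − ũ_{j+1}| + |v_j − ṽ_j| ). -/

import Mathlib

noncomputable section

open scoped BigOperators

namespace Polyharm

/-- Partial derivative of a scalar function on `ℝ^d` in the `i`-th coordinate direction. -/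
def pd {d : ℕ} (i : Fin d) (f : (Fin d → ℝ) → ℝ) (x : Fin d → ℝ) : ℝ :=
  fderiv ℝ f x (Pi.single i 1)

/-- Euclidean norm of a finite family of real numbers. -/
def vnorm {ι : Type} [Fintype ι] (f : ι → ℝ) : ℝ :=
  Real.sqrt (∑ i, f i ^ 2)

/-- Local-coordinate data for maps between Riemannian manifolds: the inverse metric
`g^{ij}` and the Christoffel symbols `Γ^k_{ij}` of a chart of the domain `(M,g)`, and
the Christoffel symbols `Γ^α_{βγ}` of a chart of the target `(N,h)`. -/
structure ChartData (m n : ℕ) where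
  ginv : (Fin m → ℝ) → Fin m → Fin m → ℝ
  ΓM : (Fin m → ℝ) → Fin m → Fin m → Fin m → ℝ
  ΓN : (Fin n → ℝ) → Fin n → Fin n → Fin n → ℝ

variable {m n : ℕ}

/-- Smoothness of the domain data. -/
def ChartData.SmoothDomain (P : ChartData m n) : Prop :=
  (∀ i j, ContDiff ℝ (⊤ : ℕ∞) fun x => P.ginv x i j) ∧
  (∀ k i j, ContDiff ℝ (⊤ : ℕ∞) fun x => P.ΓM x k i j)

/-- Smoothness of the target Christoffel symbols. -/
def ChartData.SmoothTarget (P : ChartData m n) : Prop :=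
  ∀ α β γ, ContDiff ℝ (⊤ : ℕ∞) fun y => P.ΓN y α β γ

/-- The chart data comes from Riemannian metrics: `g^{ij}` is symmetric and positive
definite, and the Christoffel symbols are symmetric in their lower indices. -/
def ChartData.Riemannian (P : ChartData m n) : Prop :=
  (∀ x i j, P.ginv x i j = P.ginv x j i) ∧
  (∀ x (v : Fin m → ℝ), v ≠ 0 → 0 < ∑ i, ∑ j, P.ginv x i j * v i * v j) ∧
  (∀ x k i j, P.ΓM x k i j = P.ΓM x k j i) ∧
  (∀ y α β γ, P.ΓN y α β γ = P.ΓN y α γ β)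

/-- The Laplace–Beltrami operator on scalar functions:
`-Δ f = g^{ij} ∂²f/∂x^i∂x^j - g^{ij} Γ^k_{ij} ∂f/∂x^k`. -/
def lap (P : ChartData m n) (f : (Fin m → ℝ) → ℝ) (x : Fin m → ℝ) : ℝ :=
  -((∑ i, ∑ j, P.ginv x i j * pd i (fun z => pd j f z) x)
    - ∑ i, ∑ j, ∑ k, P.ginv x i j * P.ΓM x k i j * pd k f x)

/-- `φ_i^β = ∂φ^β/∂x^i`. -/
def dphi (φ : (Fin m → ℝ) → Fin n → ℝ) (x : Fin m → ℝ) (i : Fin m) (β : Fin n) : ℝ :=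
  pd i (fun z => φ z β) x

/-- `⟨dφ^β, dψ^γ⟩ = g^{ij} φ_i^β ψ_j^γ`. -/
def dpair (P : ChartData m n) (φ ψ : (Fin m → ℝ) → Fin n → ℝ) (x : Fin m → ℝ)
    (β γ : Fin n) : ℝ :=
  ∑ i, ∑ j, P.ginv x i j * dphi φ x i β * dphi ψ x j γ

/-- Components `R^α_{δβγ}` of the curvature tensor of the target, with the sign
convention `R(∂/∂y^β, ∂/∂y^γ)∂/∂y^δ = R^α_{δβγ} ∂/∂y^α` of the paper. -/
def Rc (P : ChartData m n) (y : Fin n → ℝ) (α δ β γ : Fin n) : ℝ :=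
  pd β (fun z => P.ΓN z α γ δ) y - pd γ (fun z => P.ΓN z α β δ) y
    + ∑ μ, (P.ΓN y α β μ * P.ΓN y μ γ δ - P.ΓN y α γ μ * P.ΓN y μ β δ)

/-- `2S^α_{βωϑ} = ∂Γ^α_{βϑ}/∂y^ω + Γ^γ_{βϑ}Γ^α_{ωγ} + ∂Γ^α_{ωϑ}/∂y^β + Γ^γ_{ωϑ}Γ^α_{βγ}`. -/
def Scoef (P : ChartData m n) (y : Fin n → ℝ) (α β ω ϑ : Fin n) : ℝ :=
  (pd ω (fun z => P.ΓN z α β ϑ) y + (∑ γ, P.ΓN y γ β ϑ * P.ΓN y α ω γ)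
    + pd β (fun z => P.ΓN z α ω ϑ) y + ∑ γ, P.ΓN y γ ω ϑ * P.ΓN y α β γ) / 2

/-- The operator
`A^α(η,ξ) = ξ_i^ϑ(-2 g^{ij} φ_j^β Γ^α_{βϑ}) + η^ϑ((Δφ^β)Γ^α_{βϑ} - g^{ij} φ_j^β φ_i^ω S^α_{βωϑ})`. -/
def Aop (P : ChartData m n) (φ : (Fin m → ℝ) → Fin n → ℝ) (η : Fin n → ℝ)
    (ξ : Fin m → Fin n → ℝ) (x : Fin m → ℝ) (α : Fin n) : ℝ :=
  (∑ ϑ, ∑ i, ξ i ϑ * (-2 * ∑ j, ∑ β, P.ginv x i j * dphi φ x j β * P.ΓN (φ x) α β ϑ))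
    + ∑ ϑ, η ϑ * ((∑ β, lap P (fun z => φ z β) x * P.ΓN (φ x) α β ϑ)
        - ∑ i, ∑ j, ∑ β, ∑ ω,
            P.ginv x i j * dphi φ x j β * dphi φ x i ω * Scoef P (φ x) α β ω ϑ)

/-- The operator `A` applied to (the components of) a section `σ` of `φ⁻¹TN`:
`A(σ, ∂σ)`. -/
def Asec (P : ChartData m n) (φ σ : (Fin m → ℝ) → Fin n → ℝ) (x : Fin m → ℝ)
    (α : Fin n) : ℝ :=
  Aop P φ (σ x) (fun i ϑ => pd i (fun z => σ z ϑ) x) x α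

/-- Components of the tension field `τ^α(φ) = -Δφ^α + g^{ij} Γ^α_{ϑβ} φ_i^ϑ φ_j^β`. -/
def tension (P : ChartData m n) (φ : (Fin m → ℝ) → Fin n → ℝ) (x : Fin m → ℝ)
    (α : Fin n) : ℝ :=
  -(lap P (fun z => φ z α) x)
    + ∑ i, ∑ j, ∑ ϑ, ∑ β,
        P.ginv x i j * P.ΓN (φ x) α ϑ β * dphi φ x i ϑ * dphi φ x j β

/-- The components `u_j` of `Δ̄^j τ(φ)`: `u_0 = τ(φ)` and
`u_{j+1} = Δ u_j + A(u_j, ∂u_j)` (local expression of the rough Laplacian). -/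
def uvar (P : ChartData m n) (φ : (Fin m → ℝ) → Fin n → ℝ) :
    ℕ → (Fin m → ℝ) → Fin n → ℝ
  | 0 => tension P φ
  | j+1 => fun x α => lap P (fun z => uvar P φ j z α) x + Asec P φ (uvar P φ j) x α

/-- `v_j = du_j`, i.e. `v_{j i}^α = ∂u_j^α/∂x^i`. -/
def vvar (P : ChartData m n) (φ : (Fin m → ℝ) → Fin n → ℝ) (j : ℕ) (x : Fin m → ℝ)
    (i : Fin m) (α : Fin n) : ℝ :=
  pd i (fun z => uvar P φ j z α) x

/-- Components of the pull-back covariant derivative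
`(∇̄_{∂_i} σ)^γ = ∂σ^γ/∂x^i + Γ^γ_{βδ}(φ) φ_i^β σ^δ`. -/
def covD (P : ChartData m n) (φ σ : (Fin m → ℝ) → Fin n → ℝ) (i : Fin m)
    (x : Fin m → ℝ) (γ : Fin n) : ℝ :=
  pd i (fun z => σ z γ) x + ∑ β, ∑ δ, P.ΓN (φ x) γ β δ * dphi φ x i β * σ x δ

/-- `(Tr_g R^N(X, dφ(·))dφ(·))^α`. -/
def trRphi (P : ChartData m n) (φ X : (Fin m → ℝ) → Fin n → ℝ) (x : Fin m → ℝ)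
    (α : Fin n) : ℝ :=
  ∑ i, ∑ j, ∑ β, ∑ γ, ∑ δ,
    P.ginv x i j * Rc P (φ x) α δ β γ * X x β * dphi φ x i γ * dphi φ x j δ

/-- `(Tr_g R^N(dφ(·), X)dφ(·))^α`. -/
def trRphi2 (P : ChartData m n) (φ X : (Fin m → ℝ) → Fin n → ℝ) (x : Fin m → ℝ)
    (α : Fin n) : ℝ :=
  ∑ i, ∑ j, ∑ β, ∑ γ, ∑ δ,
    P.ginv x i j * Rc P (φ x) α δ β γ * dphi φ x i β * X x γ * dphi φ x j δ

/-- `(Tr_g R^N(∇̄_{(·)}W, Z)dφ(·))^α`. -/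
def trRD (P : ChartData m n) (φ W Z : (Fin m → ℝ) → Fin n → ℝ) (x : Fin m → ℝ)
    (α : Fin n) : ℝ :=
  ∑ i, ∑ j, ∑ β, ∑ γ, ∑ δ,
    P.ginv x i j * Rc P (φ x) α δ β γ * covD P φ W i x β * Z x γ * dphi φ x j δ

/-- `(Tr_g R^N(W, ∇̄_{(·)}Z)dφ(·))^α`. -/
def trRD2 (P : ChartData m n) (φ W Z : (Fin m → ℝ) → Fin n → ℝ) (x : Fin m → ℝ)
    (α : Fin n) : ℝ :=
  ∑ i, ∑ j, ∑ β, ∑ γ, ∑ δ,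
    P.ginv x i j * Rc P (φ x) α δ β γ * W x β * covD P φ Z i x γ * dphi φ x j δ

/-- Local components of Maeta's `k`-tension field `τ_k(φ)`, for `k = 2s`:
`τ_{2s}(φ) = Δ̄^{2s-1}τ(φ) - R^N(Δ̄^{2s-2}τ(φ), dφ(e_j))dφ(e_j)
  - Σ_{ℓ=1}^{s-1}( R^N(∇̄_{e_j}Δ̄^{s+ℓ-2}τ(φ), Δ̄^{s-ℓ-1}τ(φ))dφ(e_j)
                 - R^N(Δ̄^{s+ℓ-2}τ(φ), ∇̄_{e_j}Δ̄^{s-ℓ-1}τ(φ))dφ(e_j) )`,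
and for `k = 2s+1`:
`τ_{2s+1}(φ) = Δ̄^{2s}τ(φ) - R^N(Δ̄^{2s-1}τ(φ), dφ(e_j))dφ(e_j)
  - Σ_{ℓ=1}^{s-1}( R^N(∇̄_{e_j}Δ̄^{s+ℓ-1}τ(φ), Δ̄^{s-ℓ-1}τ(φ))dφ(e_j)
                 - R^N(Δ̄^{s+ℓ-1}τ(φ), ∇̄_{e_j}Δ̄^{s-ℓ-1}τ(φ))dφ(e_j) )
  - R^N(∇̄_{e_j}Δ̄^{s-1}τ(φ), Δ̄^{s-1}τ(φ))dφ(e_j)`. -/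
def tauK (P : ChartData m n) (φ : (Fin m → ℝ) → Fin n → ℝ) (k : ℕ) (x : Fin m → ℝ)
    (α : Fin n) : ℝ :=
  if Even k then
    uvar P φ (k-1) x α - trRphi P φ (uvar P φ (k-2)) x α
      - ∑ ℓ ∈ Finset.Icc 1 (k/2 - 1),
          (trRD P φ (uvar P φ (k/2 + ℓ - 2)) (uvar P φ (k/2 - ℓ - 1)) x α
            - trRD2 P φ (uvar P φ (k/2 + ℓ - 2)) (uvar P φ (k/2 - ℓ - 1)) x α)
  else
    uvar P φ (k-1) x α - trRphi P φ (uvar P φ (k-2)) x α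
      - (∑ ℓ ∈ Finset.Icc 1 (k/2 - 1),
          (trRD P φ (uvar P φ (k/2 + ℓ - 1)) (uvar P φ (k/2 - ℓ - 1)) x α
            - trRD2 P φ (uvar P φ (k/2 + ℓ - 1)) (uvar P φ (k/2 - ℓ - 1)) x α))
      - trRD P φ (uvar P φ (k/2 - 1)) (uvar P φ (k/2 - 1)) x α

/-- Components `(∇dφ)(∂_i,∂_j)^α` of the second fundamental form of `φ`. -/
def sff (P : ChartData m n) (φ : (Fin m → ℝ) → Fin n → ℝ) (x : Fin m → ℝ)
    (i j : Fin m) (α : Fin n) : ℝ :=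
  pd i (fun z => dphi φ z j α) x - (∑ k, P.ΓM x k i j * dphi φ x k α)
    + ∑ β, ∑ γ, P.ΓN (φ x) α β γ * dphi φ x i β * dphi φ x j γ

set_option maxHeartbeats 1000000
section Aux

lemma contDiff_pd {d : ℕ} {f : (Fin d → ℝ) → ℝ} (hf : ContDiff ℝ (⊤:ℕ∞) f) (i : Fin d) :
    ContDiff ℝ (⊤:ℕ∞) (pd i f) :=
  (hf.fderiv_right (by simp)).clm_apply contDiff_const

lemma contDiff_dphi {φ : (Fin m → ℝ) → Fin n → ℝ} (hφ : ContDiff ℝ (⊤:ℕ∞) φ) (i : Fin m)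
    (β : Fin n) : ContDiff ℝ (⊤:ℕ∞) (fun x => dphi φ x i β) :=
  contDiff_pd (contDiff_pi.1 hφ β) i

lemma contDiff_lap {P : ChartData m n} (hPdom : P.SmoothDomain) {f : (Fin m → ℝ) → ℝ}
    (hf : ContDiff ℝ (⊤:ℕ∞) f) : ContDiff ℝ (⊤:ℕ∞) (lap P f) := by
  unfold lap
  apply ContDiff.neg
  apply ContDiff.sub
  · exact ContDiff.sum fun i _ => ContDiff.sum fun j _ =>
      (hPdom.1 i j).mul (contDiff_pd (contDiff_pd hf j) i)
  · exact ContDiff.sum fun i _ => ContDiff.sum fun j _ => ContDiff.sum fun k _ =>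
      (((hPdom.1 i j).mul (hPdom.2 k i j)).mul (contDiff_pd hf k))

lemma contDiff_tension {P : ChartData m n} (hPdom : P.SmoothDomain) (hPtar : P.SmoothTarget)
    {φ : (Fin m → ℝ) → Fin n → ℝ} (hφ : ContDiff ℝ (⊤:ℕ∞) φ) (α : Fin n) :
    ContDiff ℝ (⊤:ℕ∞) (fun x => tension P φ x α) := by
  unfold tension
  apply ContDiff.add
  · exact (contDiff_lap hPdom (contDiff_pi.1 hφ α)).neg
  · exact ContDiff.sum fun i _ => ContDiff.sum fun j _ => ContDiff.sum fun ϑ _ =>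
      ContDiff.sum fun β _ =>
      (((hPdom.1 i j).mul ((hPtar α ϑ β).comp hφ)).mul (contDiff_dphi hφ i ϑ)).mul
        (contDiff_dphi hφ j β)

lemma contDiff_Scoef {P : ChartData m n} (hPtar : P.SmoothTarget) (α β ω ϑ : Fin n) :
    ContDiff ℝ (⊤:ℕ∞) (fun y => Scoef P y α β ω ϑ) := by
  unfold Scoef
  apply ContDiff.div_const
  apply ContDiff.add
  apply ContDiff.add
  apply ContDiff.add
  · exact contDiff_pd (hPtar α β ϑ) ω
  · exact ContDiff.sum fun γ _ => (hPtar γ β ϑ).mul (hPtar α ω γ)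
  · exact contDiff_pd (hPtar α ω ϑ) β
  · exact ContDiff.sum fun γ _ => (hPtar γ ω ϑ).mul (hPtar α β γ)

lemma contDiff_Asec {P : ChartData m n} (hPdom : P.SmoothDomain) (hPtar : P.SmoothTarget)
    {φ σ : (Fin m → ℝ) → Fin n → ℝ} (hφ : ContDiff ℝ (⊤:ℕ∞) φ)
    (hσ : ∀ α, ContDiff ℝ (⊤:ℕ∞) (fun x => σ x α)) (α : Fin n) :
    ContDiff ℝ (⊤:ℕ∞) (fun x => Asec P φ σ x α) := by
  unfold Asec Aop
  apply ContDiff.add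
  · exact ContDiff.sum fun ϑ _ => ContDiff.sum fun i _ =>
      (contDiff_pd (hσ ϑ) i).mul
        ((contDiff_const.mul (ContDiff.sum fun j _ => ContDiff.sum fun β _ =>
          ((hPdom.1 i j).mul (contDiff_dphi hφ j β)).mul ((hPtar α β ϑ).comp hφ))))
  · exact ContDiff.sum fun ϑ _ => (hσ ϑ).mul
      (ContDiff.sub
        (ContDiff.sum fun β _ =>
          (contDiff_lap hPdom (contDiff_pi.1 hφ β)).mul
            ((hPtar α β ϑ).comp hφ))
        (ContDiff.sum fun i _ => ContDiff.sum fun j _ => ContDiff.sum fun β _ =>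
          ContDiff.sum fun ω _ =>
          (((hPdom.1 i j).mul (contDiff_dphi hφ j β)).mul (contDiff_dphi hφ i ω)).mul
            ((contDiff_Scoef hPtar α β ω ϑ).comp hφ)))

lemma contDiff_uvar {P : ChartData m n} (hPdom : P.SmoothDomain) (hPtar : P.SmoothTarget)
    {φ : (Fin m → ℝ) → Fin n → ℝ} (hφ : ContDiff ℝ (⊤:ℕ∞) φ) (j : ℕ) (α : Fin n) :
    ContDiff ℝ (⊤:ℕ∞) (fun x => uvar P φ j x α) := by
  induction j generalizing α with
  | zero => exact contDiff_tension hPdom hPtar hφ α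
  | succ j ih =>
    show ContDiff ℝ (⊤:ℕ∞) fun x => lap P (fun z => uvar P φ j z α) x + Asec P φ (uvar P φ j) x α
    exact (contDiff_lap hPdom (ih α)).add (contDiff_Asec hPdom hPtar hφ ih α)

end Aux
section Vnorm

lemma vnorm_nonneg {ι : Type} [Fintype ι] (f : ι → ℝ) : 0 ≤ vnorm f := Real.sqrt_nonneg _

lemma vnorm_eq_norm {ι : Type} [Fintype ι] (f : ι → ℝ) :
    vnorm f = ‖(WithLp.equiv 2 (ι → ℝ)).symm f‖ := by
  rw [EuclideanSpace.norm_eq]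
  unfold vnorm
  congr 1
  refine Finset.sum_congr rfl fun i _ => ?_
  show f i ^ 2 = ‖f i‖ ^ 2
  rw [Real.norm_eq_abs, sq_abs]

lemma vnorm_sub_le {ι : Type} [Fintype ι] (f g : ι → ℝ) :
    vnorm (fun i => f i - g i) ≤ vnorm f + vnorm g := by
  rw [vnorm_eq_norm, vnorm_eq_norm, vnorm_eq_norm]
  exact norm_sub_le _ _

lemma norm_le_vnorm {ι : Type} [Fintype ι] (f : ι → ℝ) : ‖f‖ ≤ vnorm f := by
  refine (pi_norm_le_iff_of_nonneg (vnorm_nonneg f)).2 fun i => ?_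
  rw [Real.norm_eq_abs, ← Real.sqrt_sq_eq_abs]
  exact Real.sqrt_le_sqrt (Finset.single_le_sum (fun j _ => sq_nonneg (f j)) (Finset.mem_univ i))

lemma vnorm_le_norm {ι : Type} [Fintype ι] (f : ι → ℝ) :
    vnorm f ≤ Real.sqrt (Fintype.card ι) * ‖f‖ := by
  rw [← Real.sqrt_sq (norm_nonneg f), ← Real.sqrt_mul (by positivity)]
  apply Real.sqrt_le_sqrt
  calc ∑ i, f i ^ 2 ≤ ∑ _i : ι, ‖f‖ ^ 2 := by
        refine Finset.sum_le_sum fun i _ => ?_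
        rw [← sq_abs, ← Real.norm_eq_abs]
        exact pow_le_pow_left₀ (norm_nonneg _) (norm_le_pi_norm f i) 2
    _ = (Fintype.card ι) * ‖f‖ ^ 2 := by simp [Finset.sum_const, nsmul_eq_mul]

end Vnorm
section HfunDef

/-- Data space: (x, y, p, t, η, ξ). -/
abbrev EData (m n : ℕ) : Type :=
  (Fin m → ℝ) × (Fin n → ℝ) × ((Fin m × Fin n) → ℝ) × (Fin n → ℝ) × (Fin n → ℝ)
    × ((Fin m × Fin n) → ℝ)

/-- The operator `A` written as a smooth function of the pointwise data
`(x, φ(x), dφ(x), u₀(x), u_j(x), v_j(x))`, using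
`Δφ^β = -u₀^β + g^{ij} Γ^β_{ϑβ'} φ_i^ϑ φ_j^{β'}`. -/
def Hfun (P : ChartData m n) (z : EData m n) (α : Fin n) : ℝ :=
  (∑ ϑ, ∑ i, z.2.2.2.2.2 (i, ϑ) *
      (-2 * ∑ j, ∑ β, P.ginv z.1 i j * z.2.2.1 (j, β) * P.ΓN z.2.1 α β ϑ))
    + ∑ ϑ, z.2.2.2.2.1 ϑ *
        ((∑ β, (-(z.2.2.2.1 β) + ∑ i, ∑ j, ∑ ϑ', ∑ β',
            P.ginv z.1 i j * P.ΓN z.2.1 β ϑ' β' * z.2.2.1 (i, ϑ') * z.2.2.1 (j, β'))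
              * P.ΓN z.2.1 α β ϑ)
          - ∑ i, ∑ j, ∑ β, ∑ ω,
              P.ginv z.1 i j * z.2.2.1 (j, β) * z.2.2.1 (i, ω) * Scoef P z.2.1 α β ω ϑ)

/-- The pointwise data of a map `φ` at stage `j`. -/
def Zmap (P : ChartData m n) (φ : (Fin m → ℝ) → Fin n → ℝ) (j : ℕ) (x : Fin m → ℝ) :
    EData m n :=
  (x, φ x, fun q => dphi φ x q.1 q.2, uvar P φ 0 x, uvar P φ j x,
    fun q => vvar P φ j x q.1 q.2)

lemma lap_phi_eq (P : ChartData m n) (φ : (Fin m → ℝ) → Fin n → ℝ) (x : Fin m → ℝ)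
    (β : Fin n) :
    lap P (fun z => φ z β) x = -(uvar P φ 0 x β) + ∑ i, ∑ j, ∑ ϑ', ∑ β',
      P.ginv x i j * P.ΓN (φ x) β ϑ' β' * dphi φ x i ϑ' * dphi φ x j β' := by
  show _ = -(tension P φ x β) + _
  unfold tension
  ring

lemma Asec_eq_Hfun (P : ChartData m n) (φ : (Fin m → ℝ) → Fin n → ℝ) (j : ℕ)
    (x : Fin m → ℝ) (α : Fin n) :
    Asec P φ (uvar P φ j) x α = Hfun P (Zmap P φ j x) α := by
  unfold Asec Aop Hfun Zmap vvar
  refine congrArg₂ (· + ·) rfl ?_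
  refine Finset.sum_congr rfl fun ϑ _ => ?_
  refine congrArg₂ (· * ·) rfl ?_
  refine congrArg₂ (· - ·) ?_ rfl
  refine Finset.sum_congr rfl fun β _ => ?_
  rw [lap_phi_eq]

end HfunDef
section HfunSmooth

lemma contDiff_Hfun {P : ChartData m n} (hPdom : P.SmoothDomain) (hPtar : P.SmoothTarget)
    (α : Fin n) : ContDiff ℝ (⊤:ℕ∞) (fun z : EData m n => Hfun P z α) := by
  have hx : ContDiff ℝ (⊤:ℕ∞) (fun z : EData m n => z.1) := contDiff_fst
  have hy : ContDiff ℝ (⊤:ℕ∞) (fun z : EData m n => z.2.1) := contDiff_fst.comp contDiff_snd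
  have hp : ContDiff ℝ (⊤:ℕ∞) (fun z : EData m n => z.2.2.1) :=
    contDiff_fst.comp (contDiff_snd.comp contDiff_snd)
  have ht : ContDiff ℝ (⊤:ℕ∞) (fun z : EData m n => z.2.2.2.1) :=
    contDiff_fst.comp (contDiff_snd.comp (contDiff_snd.comp contDiff_snd))
  have hη : ContDiff ℝ (⊤:ℕ∞) (fun z : EData m n => z.2.2.2.2.1) :=
    contDiff_fst.comp (contDiff_snd.comp (contDiff_snd.comp (contDiff_snd.comp contDiff_snd)))
  have hξ : ContDiff ℝ (⊤:ℕ∞) (fun z : EData m n => z.2.2.2.2.2) :=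
    contDiff_snd.comp (contDiff_snd.comp (contDiff_snd.comp (contDiff_snd.comp contDiff_snd)))
  have hg : ∀ i j, ContDiff ℝ (⊤:ℕ∞) (fun z : EData m n => P.ginv z.1 i j) :=
    fun i j => (hPdom.1 i j).comp hx
  have hΓ : ∀ a b c, ContDiff ℝ (⊤:ℕ∞) (fun z : EData m n => P.ΓN z.2.1 a b c) :=
    fun a b c => (hPtar a b c).comp hy
  have hS : ∀ a b c d, ContDiff ℝ (⊤:ℕ∞) (fun z : EData m n => Scoef P z.2.1 a b c d) :=
    fun a b c d => (contDiff_Scoef hPtar a b c d).comp hy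
  have hpq : ∀ q, ContDiff ℝ (⊤:ℕ∞) (fun z : EData m n => z.2.2.1 q) :=
    fun q => contDiff_pi.1 hp q
  unfold Hfun
  apply ContDiff.add
  · exact ContDiff.sum fun ϑ _ => ContDiff.sum fun i _ =>
      (contDiff_pi.1 hξ (i, ϑ)).mul
        (contDiff_const.mul (ContDiff.sum fun j _ => ContDiff.sum fun β _ =>
          ((hg i j).mul (hpq (j, β))).mul (hΓ α β ϑ)))
  · exact ContDiff.sum fun ϑ _ => (contDiff_pi.1 hη ϑ).mul
      (ContDiff.sub
        (ContDiff.sum fun β _ =>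
          (ContDiff.add (contDiff_pi.1 ht β).neg
            (ContDiff.sum fun i _ => ContDiff.sum fun j _ => ContDiff.sum fun ϑ' _ =>
              ContDiff.sum fun β' _ =>
              (((hg i j).mul (hΓ β ϑ' β')).mul (hpq (i, ϑ'))).mul (hpq (j, β')))).mul
            (hΓ α β ϑ))
        (ContDiff.sum fun i _ => ContDiff.sum fun j _ => ContDiff.sum fun β _ =>
          ContDiff.sum fun ω _ =>
          (((hg i j).mul (hpq (j, β))).mul (hpq (i, ω))).mul (hS α β ω ϑ)))

lemma contDiff_Hv {P : ChartData m n} (hPdom : P.SmoothDomain) (hPtar : P.SmoothTarget) :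
    ContDiff ℝ (⊤:ℕ∞) (fun z : EData m n => (fun α => Hfun P z α)) :=
  contDiff_pi.2 fun α => contDiff_Hfun hPdom hPtar α

lemma continuous_Zmap {P : ChartData m n} (hPdom : P.SmoothDomain) (hPtar : P.SmoothTarget)
    {φ : (Fin m → ℝ) → Fin n → ℝ} (hφ : ContDiff ℝ (⊤:ℕ∞) φ) (j : ℕ) :
    Continuous (Zmap P φ j) := by
  unfold Zmap
  refine continuous_id.prodMk (hφ.continuous.prodMk (Continuous.prodMk ?_
    ((Continuous.prodMk ?_ (Continuous.prodMk ?_ ?_)))))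
  · exact continuous_pi fun q => (contDiff_dphi hφ q.1 q.2).continuous
  · exact continuous_pi fun β => (contDiff_uvar hPdom hPtar hφ 0 β).continuous
  · exact continuous_pi fun β => (contDiff_uvar hPdom hPtar hφ j β).continuous
  · exact continuous_pi fun q =>
      (contDiff_pd (contDiff_uvar hPdom hPtar hφ j q.2) q.1).continuous

end HfunSmooth
section MainAux

lemma norm_sub_le_vnorm {ι : Type} [Fintype ι] (f g : ι → ℝ) :
    ‖f - g‖ ≤ vnorm (fun i => f i - g i) := norm_le_vnorm _

lemma vnorm_sub_le_norm {ι : Type} [Fintype ι] (f g : ι → ℝ) :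
    vnorm (fun i => f i - g i) ≤ Real.sqrt (Fintype.card ι) * ‖f - g‖ := vnorm_le_norm _

lemma norm_Zmap_sub_le (P : ChartData m n) (φ ψ : (Fin m → ℝ) → Fin n → ℝ) (j : ℕ)
    (x : Fin m → ℝ) :
    ‖Zmap P φ j x - Zmap P ψ j x‖ ≤
      vnorm (fun α : Fin n => φ x α - ψ x α)
        + vnorm (fun p : Fin m × Fin n => dphi φ x p.1 p.2 - dphi ψ x p.1 p.2)
        + vnorm (fun α : Fin n => uvar P φ 0 x α - uvar P ψ 0 x α)
        + vnorm (fun α : Fin n => uvar P φ j x α - uvar P ψ j x α)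
        + vnorm (fun p : Fin m × Fin n => vvar P φ j x p.1 p.2 - vvar P ψ j x p.1 p.2) := by
  have h1 := norm_sub_le_vnorm (φ x) (ψ x)
  have h2 := norm_sub_le_vnorm (fun q : Fin m × Fin n => dphi φ x q.1 q.2)
    (fun q => dphi ψ x q.1 q.2)
  have h3 := norm_sub_le_vnorm (uvar P φ 0 x) (uvar P ψ 0 x)
  have h4 := norm_sub_le_vnorm (uvar P φ j x) (uvar P ψ j x)
  have h5 := norm_sub_le_vnorm (fun q : Fin m × Fin n => vvar P φ j x q.1 q.2)
    (fun q => vvar P ψ j x q.1 q.2)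
  have n1 := vnorm_nonneg (fun α : Fin n => φ x α - ψ x α)
  have n2 := vnorm_nonneg (fun p : Fin m × Fin n => dphi φ x p.1 p.2 - dphi ψ x p.1 p.2)
  have n3 := vnorm_nonneg (fun α : Fin n => uvar P φ 0 x α - uvar P ψ 0 x α)
  have n4 := vnorm_nonneg (fun α : Fin n => uvar P φ j x α - uvar P ψ j x α)
  have n5 := vnorm_nonneg (fun p : Fin m × Fin n => vvar P φ j x p.1 p.2 - vvar P ψ j x p.1 p.2)
  have hz : Zmap P φ j x - Zmap P ψ j x =
      (x - x, φ x - ψ x,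
        (fun q : Fin m × Fin n => dphi φ x q.1 q.2) - (fun q => dphi ψ x q.1 q.2),
        uvar P φ 0 x - uvar P ψ 0 x, uvar P φ j x - uvar P ψ j x,
        (fun q : Fin m × Fin n => vvar P φ j x q.1 q.2) - (fun q => vvar P ψ j x q.1 q.2)) := by
    rfl
  rw [hz]
  simp only [Prod.norm_def, sub_self, norm_zero]
  refine max_le (by linarith) ?_
  refine max_le (by linarith) ?_
  refine max_le (by linarith) ?_
  refine max_le (by linarith) ?_
  exact max_le (by linarith) (by linarith)

end MainAux
/-- (Lemma 2.4 of the paper.)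
For two smooth maps `φ, φ̃` with corresponding variables `u_j, v_j, A_j` and
`ũ_j, ṽ_j, Ã_j`, and `0 ≤ j ≤ k-3`, on any open set `D` with compact closure
contained in the chart domain `U` there exists `C > 0` with
`|(u_{j+1} - A_{j+1}) - (ũ_{j+1} - Ã_{j+1})|
  ≤ C(|φ-φ̃| + |dφ-dφ̃| + |u₀-ũ₀| + |u_j-ũ_j| + |u_{j+1}-ũ_{j+1}| + |v_j-ṽ_j|)`. -/
theorem estimate_u_minus_A_difference
    {m n : ℕ} (P : ChartData m n)
    (hPdom : P.SmoothDomain) (hPtar : P.SmoothTarget)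
    (U : Set (Fin m → ℝ)) (hUopen : IsOpen U)
    (φ ψ : (Fin m → ℝ) → Fin n → ℝ)
    (hφ : ContDiff ℝ (⊤ : ℕ∞) φ) (hψ : ContDiff ℝ (⊤ : ℕ∞) ψ)
    (k : ℕ) (hk : 3 ≤ k) (j : ℕ) (hj : j ≤ k - 3)
    (D : Set (Fin m → ℝ)) (hDopen : IsOpen D) (hDcpt : IsCompact (closure D))
    (hDsub : closure D ⊆ U) :
    ∃ C > 0, ∀ x ∈ D,
      vnorm (fun α : Fin n =>
          (uvar P φ (j+1) x α - Asec P φ (uvar P φ j) x α)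
            - (uvar P ψ (j+1) x α - Asec P ψ (uvar P ψ j) x α))
        ≤ C * (vnorm (fun α : Fin n => φ x α - ψ x α)
          + vnorm (fun p : Fin m × Fin n => dphi φ x p.1 p.2 - dphi ψ x p.1 p.2)
          + vnorm (fun α : Fin n => uvar P φ 0 x α - uvar P ψ 0 x α)
          + vnorm (fun α : Fin n => uvar P φ j x α - uvar P ψ j x α)
          + vnorm (fun α : Fin n => uvar P φ (j+1) x α - uvar P ψ (j+1) x α)
          + vnorm (fun p : Fin m × Fin n => vvar P φ j x p.1 p.2 - vvar P ψ j x p.1 p.2)) := by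
  classical
  -- the Lipschitz constant for `Hv` on a large ball containing both trajectories
  set Hv : EData m n → (Fin n → ℝ) := fun z => (fun α => Hfun P z α) with hHv
  have hHsm : ContDiff ℝ (⊤:ℕ∞) Hv := contDiff_Hv hPdom hPtar
  -- both trajectories live in a compact set
  have hZφ : Continuous (Zmap P φ j) := continuous_Zmap hPdom hPtar hφ j
  have hZψ : Continuous (Zmap P ψ j) := continuous_Zmap hPdom hPtar hψ j
  have hKcpt : IsCompact (Zmap P φ j '' closure D ∪ Zmap P ψ j '' closure D) :=
    (hDcpt.image hZφ).union (hDcpt.image hZψ)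
  obtain ⟨R, hR⟩ := hKcpt.isBounded.subset_closedBall (0 : EData m n)
  set R₀ : ℝ := max R 0 with hR₀
  have hball : Zmap P φ j '' closure D ∪ Zmap P ψ j '' closure D ⊆
      Metric.closedBall (0 : EData m n) R₀ :=
    hR.trans (Metric.closedBall_subset_closedBall (le_max_left _ _))
  -- bound the derivative of `Hv` on the ball
  have hfderiv_cd : ContDiff ℝ (⊤:ℕ∞) (fderiv ℝ Hv) := hHsm.fderiv_right (by simp)
  have hfderiv_cont : Continuous (fderiv ℝ Hv) := hfderiv_cd.continuous
  obtain ⟨C₀, hC₀⟩ := (isCompact_closedBall (0 : EData m n) R₀).exists_bound_of_continuousOn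
    hfderiv_cont.continuousOn
  have hC₀0 : 0 ≤ C₀ := le_trans (norm_nonneg _)
    (hC₀ 0 (Metric.mem_closedBall_self (le_max_right _ _)))
  have hlip : ∀ z ∈ Metric.closedBall (0 : EData m n) R₀,
      ∀ w ∈ Metric.closedBall (0 : EData m n) R₀, ‖Hv z - Hv w‖ ≤ C₀ * ‖z - w‖ := by
    intro z hz w hw
    exact (convex_closedBall _ _).norm_image_sub_le_of_norm_fderiv_le
      (fun u _ => (hHsm.differentiable (by simp)).differentiableAt) hC₀ hw hz
  refine ⟨Real.sqrt n * C₀ + 1, by positivity, fun x hx => ?_⟩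
  have hxD : x ∈ closure D := subset_closure hx
  have hzφ : Zmap P φ j x ∈ Metric.closedBall (0 : EData m n) R₀ :=
    hball (Set.mem_union_left _ ⟨x, hxD, rfl⟩)
  have hzψ : Zmap P ψ j x ∈ Metric.closedBall (0 : EData m n) R₀ :=
    hball (Set.mem_union_right _ ⟨x, hxD, rfl⟩)
  -- abbreviations for the six vnorm terms
  set T1 := vnorm (fun α : Fin n => φ x α - ψ x α) with hT1
  set T2 := vnorm (fun p : Fin m × Fin n => dphi φ x p.1 p.2 - dphi ψ x p.1 p.2) with hT2
  set T3 := vnorm (fun α : Fin n => uvar P φ 0 x α - uvar P ψ 0 x α) with hT3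
  set T4 := vnorm (fun α : Fin n => uvar P φ j x α - uvar P ψ j x α) with hT4
  set T5 := vnorm (fun α : Fin n => uvar P φ (j+1) x α - uvar P ψ (j+1) x α) with hT5
  set T6 := vnorm (fun p : Fin m × Fin n => vvar P φ j x p.1 p.2 - vvar P ψ j x p.1 p.2) with hT6
  have hT1n : 0 ≤ T1 := vnorm_nonneg _
  have hT2n : 0 ≤ T2 := vnorm_nonneg _
  have hT3n : 0 ≤ T3 := vnorm_nonneg _
  have hT4n : 0 ≤ T4 := vnorm_nonneg _
  have hT5n : 0 ≤ T5 := vnorm_nonneg _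
  have hT6n : 0 ≤ T6 := vnorm_nonneg _
  -- split the left-hand side
  have hsplit : (fun α : Fin n =>
      (uvar P φ (j+1) x α - Asec P φ (uvar P φ j) x α)
        - (uvar P ψ (j+1) x α - Asec P ψ (uvar P ψ j) x α)) =
      (fun α : Fin n => (uvar P φ (j+1) x α - uvar P ψ (j+1) x α)
        - (Asec P φ (uvar P φ j) x α - Asec P ψ (uvar P ψ j) x α)) := by
    funext α; ring
  rw [hsplit]
  have step1 := vnorm_sub_le (fun α : Fin n => uvar P φ (j+1) x α - uvar P ψ (j+1) x α)
    (fun α : Fin n => Asec P φ (uvar P φ j) x α - Asec P ψ (uvar P ψ j) x α)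
  -- estimate the `A`-difference
  have hAeq : (fun α : Fin n => Asec P φ (uvar P φ j) x α - Asec P ψ (uvar P ψ j) x α)
      = fun α : Fin n => Hv (Zmap P φ j x) α - Hv (Zmap P ψ j x) α := by
    funext α
    rw [Asec_eq_Hfun, Asec_eq_Hfun]
  have step2 : vnorm (fun α : Fin n => Asec P φ (uvar P φ j) x α - Asec P ψ (uvar P ψ j) x α)
      ≤ Real.sqrt n * (C₀ * (T1 + T2 + T3 + T4 + T6)) := by
    rw [hAeq]
    calc vnorm (fun α : Fin n => Hv (Zmap P φ j x) α - Hv (Zmap P ψ j x) α)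
        ≤ Real.sqrt (Fintype.card (Fin n)) * ‖Hv (Zmap P φ j x) - Hv (Zmap P ψ j x)‖ :=
          vnorm_sub_le_norm _ _
      _ ≤ Real.sqrt n * (C₀ * ‖Zmap P φ j x - Zmap P ψ j x‖) := by
          rw [Fintype.card_fin]
          exact mul_le_mul_of_nonneg_left (hlip _ hzφ _ hzψ) (Real.sqrt_nonneg _)
      _ ≤ Real.sqrt n * (C₀ * (T1 + T2 + T3 + T4 + T6)) := by
          refine mul_le_mul_of_nonneg_left (mul_le_mul_of_nonneg_left ?_ hC₀0)
            (Real.sqrt_nonneg _)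
          exact norm_Zmap_sub_le P φ ψ j x
  have hS : T1 + T2 + T3 + T4 + T6 ≤ T1 + T2 + T3 + T4 + T5 + T6 := by linarith
  calc vnorm (fun α : Fin n => (uvar P φ (j+1) x α - uvar P ψ (j+1) x α)
        - (Asec P φ (uvar P φ j) x α - Asec P ψ (uvar P ψ j) x α))
      ≤ T5 + Real.sqrt n * (C₀ * (T1 + T2 + T3 + T4 + T6)) := le_trans step1 (by linarith)
    _ ≤ (T1 + T2 + T3 + T4 + T5 + T6)
        + Real.sqrt n * (C₀ * (T1 + T2 + T3 + T4 + T5 + T6)) := by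
        have := mul_le_mul_of_nonneg_left (mul_le_mul_of_nonneg_left hS hC₀0)
          (Real.sqrt_nonneg (n:ℝ))
        linarith
    _ = (Real.sqrt n * C₀ + 1) * (T1 + T2 + T3 + T4 + T5 + T6) := by ring

end Polyharm
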